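/- Let $R$ be a commutative ring containing $\mathbb{Q}$, let $H$ be a bialgebra over $R$ with comultiplication $\Delta$ and counit $\eta$, and let $\alpha \in H$ be a nilpotent element such that $\alpha \otimes 1$ and $1 \otimes \alpha$ are nilpotent in $H \otimes_R H$. Then $\alpha$ is primitive with $\eta(\alpha) = 0$ (i.e., $\Delta(\alpha) = \alpha \otimes 1 + 1 \otimes \alpha$ and $\eta(\alpha) = 0$) if and only if $\exp(\alpha)$ is grouplike (i.e., $\Delta(\exp \alpha) = \exp(\alpha) \otimes \exp(\alpha)$ and $\eta(\exp \alpha) = 1$), where $\exp(\alpha) = \sum_{n \ge 0} \alpha^n / n!$ is a finite sum. -/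

import Mathlib

open TensorProduct

section NexpAux

variable {A B : Type*} [Ring A] [Algebra ℚ A] [Ring B] [Algebra ℚ B]

/-- Truncated exponential `∑_{n < N} a^n / n!`. -/
noncomputable def nexpAux (N : ℕ) (a : A) : A :=
  ∑ n ∈ Finset.range N, ((n.factorial : ℚ))⁻¹ • a ^ n

theorem nexpAux_stable {a : A} {m N : ℕ} (ha : a ^ m = 0) (h : m ≤ N) :
    nexpAux N a = nexpAux m a := by
  refine (Finset.sum_subset (Finset.range_subset_range.2 h) fun n _ hn => ?_).symm
  rw [pow_eq_zero_of_le (le_of_not_gt (fun hc => hn (Finset.mem_range.2 hc))) ha, smul_zero]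

theorem nexpAux_zero {N : ℕ} (h : 1 ≤ N) : nexpAux N (0 : A) = 1 := by
  rw [nexpAux, Finset.sum_eq_single 0]
  · simp
  · intro n _ hn; rw [zero_pow hn, smul_zero]
  · intro h0; exact absurd (Finset.mem_range.2 h) h0

theorem map_nexpAux (f : A →ₐ[ℚ] B) (N : ℕ) (a : A) : f (nexpAux N a) = nexpAux N (f a) := by
  rw [nexpAux, map_sum]
  exact Finset.sum_congr rfl fun n _ => by rw [map_smul, map_pow]

theorem choose_coeff_aux (i j : ℕ) :
    (((i+j).factorial : ℚ))⁻¹ * ((i+j).choose i : ℚ)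
      = ((i.factorial : ℚ))⁻¹ * ((j.factorial : ℚ))⁻¹ := by
  have h := Nat.choose_mul_factorial_mul_factorial (Nat.le_add_right i j)
  rw [Nat.add_sub_cancel_left] at h
  have hcast := congrArg (fun n : ℕ => (n : ℚ)) h
  push_cast at hcast
  have hi : (i.factorial : ℚ) ≠ 0 := Nat.cast_ne_zero.2 i.factorial_ne_zero
  have hj : (j.factorial : ℚ) ≠ 0 := Nat.cast_ne_zero.2 j.factorial_ne_zero
  have hn : (((i+j).factorial : ℚ)) ≠ 0 := Nat.cast_ne_zero.2 (i+j).factorial_ne_zero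
  field_simp
  linarith [hcast]

theorem nexpAux_add {a b : A} (hc : Commute a b) {p q : ℕ} (ha : a ^ p = 0) (hb : b ^ q = 0) :
    nexpAux (p + q) (a + b) = nexpAux p a * nexpAux q b := by
  set N := p + q with hN
  set g : ℕ × ℕ → A := fun ij =>
    (((ij.1.factorial : ℚ))⁻¹ • a ^ ij.1) * (((ij.2.factorial : ℚ))⁻¹ • b ^ ij.2) with hg
  have hgzero : ∀ ij : ℕ × ℕ, (p ≤ ij.1 ∨ q ≤ ij.2) → g ij = 0 := by
    rintro ⟨i, j⟩ (h | h)
    · simp [hg, pow_eq_zero_of_le h ha]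
    · simp [hg, pow_eq_zero_of_le h hb]
  have hrhs : nexpAux p a * nexpAux q b = ∑ ij ∈ Finset.range p ×ˢ Finset.range q, g ij := by
    rw [nexpAux, nexpAux, Finset.sum_mul_sum]
    rw [Finset.sum_product]
  have hrhs2 : nexpAux p a * nexpAux q b = ∑ ij ∈ Finset.range N ×ˢ Finset.range N, g ij := by
    rw [hrhs]
    refine Finset.sum_subset
      (Finset.product_subset_product (Finset.range_subset_range.2 ?_) (Finset.range_subset_range.2 ?_)) ?_ <;>
      try omega
    rintro ⟨i, j⟩ _ hne
    simp only [Finset.mem_product, Finset.mem_range] at hne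
    exact hgzero (i, j) (by omega)
  have hlhs : nexpAux N (a + b) = ∑ n ∈ Finset.range N, ∑ ij ∈ Finset.HasAntidiagonal.antidiagonal n, g ij := by
    rw [nexpAux]
    refine Finset.sum_congr rfl fun n _ => ?_
    rw [hc.add_pow', Finset.smul_sum]
    refine Finset.sum_congr rfl fun ij hij => ?_
    obtain ⟨i, j⟩ := ij
    have hijn : i + j = n := Finset.HasAntidiagonal.mem_antidiagonal.1 hij
    rw [← Nat.cast_smul_eq_nsmul ℚ, smul_smul]
    rw [hg]
    simp only
    rw [smul_mul_smul_comm, ← hijn, choose_coeff_aux]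
  have hbi : ((Finset.range N).biUnion fun n => Finset.HasAntidiagonal.antidiagonal n) =
      (Finset.range N ×ˢ Finset.range N).filter (fun ij => ij.1 + ij.2 < N) := by
    ext ⟨i, j⟩
    simp only [Finset.mem_biUnion, Finset.mem_range, Finset.HasAntidiagonal.mem_antidiagonal,
      Finset.mem_filter, Finset.mem_product]
    constructor
    · rintro ⟨n, hn, hrf⟩; omega
    · rintro ⟨⟨_, _⟩, h⟩; exact ⟨i + j, h, rfl⟩
  rw [hlhs, hrhs2, ← Finset.sum_biUnion, hbi]
  · refine Finset.sum_subset (Finset.filter_subset _ _) ?_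
    rintro ⟨i, j⟩ hmem hne
    simp only [Finset.mem_filter, Finset.mem_product, Finset.mem_range] at hmem hne
    exact hgzero (i, j) (by omega)
  · intro x _ y _ hxy
    simp only [Finset.disjoint_left, Finset.HasAntidiagonal.mem_antidiagonal]
    rintro ⟨i, j⟩ h1 h2
    exact hxy (h1 ▸ h2 ▸ rfl)

theorem add_pow_eq_zero_of_commute {a b : A} (hc : Commute a b) {p q : ℕ}
    (ha : a ^ p = 0) (hb : b ^ q = 0) : (a + b) ^ (p + q) = 0 := by
  rw [hc.add_pow]
  refine Finset.sum_eq_zero fun k hk => ?_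
  rcases le_or_gt p k with h | h
  · rw [pow_eq_zero_of_le h ha, zero_mul, zero_mul]
  · rw [pow_eq_zero_of_le (by omega : q ≤ p + q - k) hb, mul_zero, zero_mul]

theorem nexpAux_nsmul {a : A} {p : ℕ} (hp : 1 ≤ p) (ha : a ^ p = 0) (k : ℕ) :
    nexpAux p (k • a) = (nexpAux p a) ^ k := by
  induction k with
  | zero => simpa using nexpAux_zero hp
  | succ k ih =>
    have hka : (k • a) ^ p = 0 := by rw [smul_pow, ha, smul_zero]
    have hk1 : ((k+1) • a) ^ p = 0 := by rw [smul_pow, ha, smul_zero]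
    have hcom : Commute (k • a) a := (Commute.refl a).smul_left k
    rw [pow_succ, ← ih, ← nexpAux_add hcom hka ha, ← succ_nsmul]
    exact (nexpAux_stable hk1 (Nat.le_add_right p p)).symm

theorem nexpAux_inj {a b : A} {m : ℕ} (ha : a ^ m = 0) (hb : b ^ m = 0)
    (h : nexpAux m a = nexpAux m b) : a = b := by
  rcases Nat.lt_or_ge m 2 with hm | hm
  · interval_cases m
    · have h1 : (1 : A) = 0 := by simpa using ha
      have : Subsingleton A := subsingleton_of_zero_eq_one h1.symm
      exact Subsingleton.elim a b
    · rw [pow_one] at ha hb; rw [ha, hb]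
  · have hm1 : 1 ≤ m := by omega
    set c : ℕ → A := fun n => ((n.factorial : ℚ))⁻¹ • (a ^ n - b ^ n) with hc
    have key : ∀ k : ℕ, ∑ n ∈ Finset.range m, ((k : ℚ)) ^ n • c n = 0 := by
      intro k
      have h1 : nexpAux m (k • a) = nexpAux m (k • b) := by
        rw [nexpAux_nsmul hm1 ha, nexpAux_nsmul hm1 hb, h]
      have h2 : ∀ (x : A), nexpAux m (k • x) = ∑ n ∈ Finset.range m,
          ((k:ℚ))^n • (((n.factorial : ℚ))⁻¹ • x ^ n) := by
        intro x
        rw [nexpAux]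
        refine Finset.sum_congr rfl fun n _ => ?_
        rw [smul_pow, ← Nat.cast_smul_eq_nsmul ℚ, Nat.cast_pow, smul_comm]
      rw [h2, h2, ← sub_eq_zero, ← Finset.sum_sub_distrib] at h1
      rw [← h1]
      refine Finset.sum_congr rfl fun n _ => ?_
      simp only [hc, smul_sub]
    set v : Fin m → ℚ := fun k => (k : ℚ) with hv
    set M : Matrix (Fin m) (Fin m) ℚ := Matrix.vandermonde v with hM
    have hdet : M.det ≠ 0 := by
      rw [hM, Matrix.det_vandermonde]
      refine Finset.prod_ne_zero_iff.2 fun i _ => Finset.prod_ne_zero_iff.2 fun j hj => ?_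
      have hij : i < j := Finset.mem_Ioi.1 hj
      have hij' : (i : ℕ) < (j : ℕ) := hij
      have hlt : (v i) < (v j) := by simp only [hv]; exact_mod_cast hij'
      exact sub_ne_zero.2 (ne_of_gt hlt)
    have h0 : ∀ i : Fin m, ∑ j : Fin m, M i j • c (j : ℕ) = 0 := by
      intro i
      have hk := key (i : ℕ)
      rw [← Fin.sum_univ_eq_sum_range (fun n => (((i:ℕ) : ℚ))^n • c n)] at hk
      simpa [hM, Matrix.vandermonde_apply, hv] using hk
    have hMinv : M⁻¹ * M = 1 := Matrix.nonsing_inv_mul M (isUnit_iff_ne_zero.2 hdet)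
    have hcz : ∀ j : Fin m, c (j : ℕ) = 0 := by
      intro j
      calc c (j : ℕ) = ∑ n : Fin m, ((1 : Matrix (Fin m) (Fin m) ℚ) j n) • c (n : ℕ) := by
            rw [Finset.sum_eq_single j]
            · simp [Matrix.one_apply]
            · intro n _ hn
              simp [Matrix.one_apply, (Ne.symm hn)]
            · simp
        _ = ∑ n : Fin m, ((M⁻¹ * M) j n) • c (n : ℕ) := by rw [hMinv]
        _ = ∑ n : Fin m, ∑ i : Fin m, (M⁻¹ j i * M i n) • c (n : ℕ) := by
            refine Finset.sum_congr rfl fun n _ => ?_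
            rw [Matrix.mul_apply, Finset.sum_smul]
        _ = ∑ i : Fin m, M⁻¹ j i • (∑ n : Fin m, M i n • c (n : ℕ)) := by
            rw [Finset.sum_comm]
            refine Finset.sum_congr rfl fun i _ => ?_
            rw [Finset.smul_sum]
            refine Finset.sum_congr rfl fun n _ => ?_
            rw [mul_smul]
        _ = 0 := by simp [h0]
    have h1 := hcz ⟨1, by omega⟩
    simp only [hc] at h1
    norm_num [Nat.factorial] at h1
    exact sub_eq_zero.1 h1

end NexpAux

/-- For a nilpotent `α` (with `α ⊗ 1`, `1 ⊗ α` nilpotent) in a bialgebra `H` over a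
commutative ring containing `ℚ`: `α` is primitive with `η(α) = 0` iff `exp(α)` is
grouplike, where `exp(α) = ∑_{n<m} α^n/n!` for `α^m = 0`. -/
theorem stmt12 {R H : Type*} [CommRing R] [Algebra ℚ R]
    [Ring H] [Bialgebra R H] [Algebra ℚ H] [IsScalarTower ℚ R H]
    (α : H) (m : ℕ) (hα : α ^ m = 0)
    (h1 : IsNilpotent (α ⊗ₜ[R] (1 : H))) (h2 : IsNilpotent ((1 : H) ⊗ₜ[R] α)) :
    (Coalgebra.comul (R := R) α = α ⊗ₜ[R] 1 + 1 ⊗ₜ[R] α ∧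
        Coalgebra.counit (R := R) α = 0) ↔
    (Coalgebra.comul (R := R) (∑ n ∈ Finset.range m, ((n.factorial : ℚ))⁻¹ • α ^ n)
        = (∑ n ∈ Finset.range m, ((n.factorial : ℚ))⁻¹ • α ^ n) ⊗ₜ[R]
            (∑ n ∈ Finset.range m, ((n.factorial : ℚ))⁻¹ • α ^ n) ∧
      Coalgebra.counit (R := R)
          (∑ n ∈ Finset.range m, ((n.factorial : ℚ))⁻¹ • α ^ n) = 1) := by
  letI i2 : IsScalarTower ℚ R (H ⊗[R] H) := IsScalarTower.of_algebraMap_eq fun q => by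
    rw [Algebra.TensorProduct.algebraMap_apply, Algebra.TensorProduct.algebraMap_apply,
      IsScalarTower.algebraMap_apply ℚ R H]
  set D : H →ₐ[ℚ] H ⊗[R] H := (Bialgebra.comulAlgHom R H).restrictScalars ℚ with hDdef
  set e : H →ₐ[ℚ] R := (Bialgebra.counitAlgHom R H).restrictScalars ℚ with hedef
  have hD : ∀ z : H, D z = Coalgebra.comul (R := R) z := fun z => rfl
  have he : ∀ z : H, e z = Coalgebra.counit (R := R) z := fun z => rfl
  -- handle the trivial case m = 0
  rcases Nat.eq_zero_or_pos m with rfl | hm1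
  · rw [pow_zero] at hα
    have hsub : Subsingleton H := subsingleton_of_zero_eq_one hα.symm
    have hα0 : α = 0 := Subsingleton.elim α 0
    have hR10 : (1 : R) = 0 := by
      have : e 1 = 1 := map_one e
      rw [Subsingleton.elim (1 : H) 0, map_zero] at this
      exact this.symm
    haveI hsubR : Subsingleton R := subsingleton_of_zero_eq_one hR10.symm
    haveI hsubT : Subsingleton (H ⊗[R] H) := by
      refine subsingleton_of_zero_eq_one ?_
      rw [Subsingleton.elim (1 : H ⊗[R] H) 0]
    constructor <;> intro _ <;> exact ⟨Subsingleton.elim _ _, Subsingleton.elim _ _⟩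
  -- main case m ≥ 1
  set E : H := ∑ n ∈ Finset.range m, ((n.factorial : ℚ))⁻¹ • α ^ n with hEdef
  have hE : E = nexpAux m α := rfl
  set x : H ⊗[R] H := α ⊗ₜ[R] (1 : H) with hxdef
  set y : H ⊗[R] H := (1 : H) ⊗ₜ[R] α with hydef
  have hx : x ^ m = 0 := by
    rw [hxdef, Algebra.TensorProduct.tmul_pow, hα, TensorProduct.zero_tmul]
  have hy : y ^ m = 0 := by
    rw [hydef, Algebra.TensorProduct.tmul_pow, hα, TensorProduct.tmul_zero]
  have hxy : Commute x y := by
    show x * y = y * x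
    rw [hxdef, hydef, Algebra.TensorProduct.tmul_mul_tmul, Algebra.TensorProduct.tmul_mul_tmul,
      mul_one, one_mul]
  -- `E ⊗ E = nexpAux (m+m) (x + y)`
  have hEE : E ⊗ₜ[R] E = nexpAux (m + m) (x + y) := by
    have hLx : nexpAux m x = E ⊗ₜ[R] (1 : H) := by
      have h := map_nexpAux ((Algebra.TensorProduct.includeLeft (R := R) (S := R) (A := H)
        (B := H)).restrictScalars ℚ) m α
      exact h.symm
    have hRy : nexpAux m y = (1 : H) ⊗ₜ[R] E := by
      have h := map_nexpAux (((Algebra.TensorProduct.includeRight :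
        H →ₐ[R] H ⊗[R] H)).restrictScalars ℚ) m α
      exact h.symm
    rw [nexpAux_add hxy hx hy, hLx, hRy, Algebra.TensorProduct.tmul_mul_tmul,
      mul_one, one_mul]
  -- `comul E = nexpAux m (D α)` and `(D α)^m = 0`
  have hDE : Coalgebra.comul (R := R) E = nexpAux m (D α) := by
    rw [← hD, hE, map_nexpAux]
  have hDα : (D α) ^ m = 0 := by rw [← map_pow, hα, map_zero]
  have heE : Coalgebra.counit (R := R) E = nexpAux m (e α) := by
    rw [← he, hE, map_nexpAux]
  have heα : (e α) ^ m = 0 := by rw [← map_pow, hα, map_zero]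
  constructor
  · rintro ⟨hcom, hcou⟩
    constructor
    · have hsum : (x + y) ^ m = 0 := by
        rw [← hcom, ← hD, ← map_pow, hα, map_zero]
      rw [hDE, hD, hcom, hEE]
      exact (nexpAux_stable hsum (Nat.le_add_right m m)).symm
    · rw [heE, he, hcou, nexpAux_zero hm1]
  · rintro ⟨hg, hu⟩
    have hsum : (x + y) ^ (m + m) = 0 := add_pow_eq_zero_of_commute hxy hx hy
    constructor
    · have hDαm : (D α) ^ (m + m) = 0 := pow_eq_zero_of_le (Nat.le_add_right m m) hDα
      have hmain : nexpAux (m + m) (D α) = nexpAux (m + m) (x + y) := by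
        rw [nexpAux_stable hDα (Nat.le_add_right m m), ← hDE, hg, hEE]
      have := nexpAux_inj hDαm hsum hmain
      rw [← hD, this]
    · have hmain : nexpAux m (e α) = nexpAux m (0 : R) := by
        rw [← heE, hu, nexpAux_zero hm1]
      have h0m : (0 : R) ^ m = 0 := zero_pow (by omega)
      have := nexpAux_inj heα h0m hmain
      rw [← he, this]
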